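/- Fix j : ℕ and let M(2j) denote the set of perfect matchings of Fin (2j), i.e. permutations f of Fin (2j) with f ∘ f = id and f(x) ≠ x for all x. For f, g ∈ M(2j), let L(f,g) denote the number of orbits on Fin (2j) of the subgroup of permutations generated by f and g (equivalently, the number of loops formed by the two matchings). For a finitely supported function a : (M(2j) × ℕ) →₀ ℂ, suppose that in Polynomial ℂ one has ∑_{(f,k)} ∑_{(g,l)} a(f,k) · conj(a(g,l)) · X^(L(f,g) + k + l) = 0. Then a = 0. -/
import Mathlib


/-- A perfect matching of `Fin n`: a fixed-point-free involutive permutation. -/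
def IsPerfectMatching {n : ℕ} (f : Equiv.Perm (Fin n)) : Prop :=
  f * f = 1 ∧ ∀ x, f x ≠ x

/-- The number of loops formed by two matchings `f` and `g` of `Fin n`:
the number of orbits on `Fin n` of the subgroup generated by `f` and `g`. -/
noncomputable def numLoops {n : ℕ} (f g : Equiv.Perm (Fin n)) : ℕ :=
  Nat.card (MulAction.orbitRel.Quotient (Subgroup.closure {f, g}) (Fin n))

open MulAction

variable {n : ℕ}

lemma sum_orbit_card (f g : Equiv.Perm (Fin n))
    [Fintype (orbitRel.Quotient (Subgroup.closure {f, g}) (Fin n))] :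
    ∑ ω : orbitRel.Quotient (Subgroup.closure {f, g}) (Fin n), Nat.card ω.orbit = n := by
  classical
  haveI : ∀ ω : orbitRel.Quotient (Subgroup.closure {f, g}) (Fin n), Fintype ω.orbit :=
    fun ω => Fintype.ofFinite _
  have := Nat.card_congr (selfEquivSigmaOrbits' (Subgroup.closure {f, g}) (Fin n))
  simp only [Nat.card_eq_fintype_card, Fintype.card_fin, Fintype.card_sigma] at this
  simp only [Nat.card_eq_fintype_card]
  refine Eq.trans ?_ this.symm; congr!

lemma fx_mem_orbit (f g : Equiv.Perm (Fin n)) (x : Fin n) :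
    f x ∈ orbit (Subgroup.closure {f, g}) x :=
  ⟨⟨f, Subgroup.subset_closure (by simp)⟩, rfl⟩

lemma gx_mem_orbit (f g : Equiv.Perm (Fin n)) (x : Fin n) :
    g x ∈ orbit (Subgroup.closure {f, g}) x :=
  ⟨⟨g, Subgroup.subset_closure (by simp)⟩, rfl⟩

lemma two_le_orbit_card (f g : Equiv.Perm (Fin n)) (hf : ∀ x, f x ≠ x)
    (ω : orbitRel.Quotient (Subgroup.closure {f, g}) (Fin n)) : 2 ≤ Nat.card ω.orbit := by
  rw [orbitRel.Quotient.orbit_eq_orbit_out ω Quotient.out_eq', Nat.card_coe_set_eq]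
  have h1 : 1 < (orbit (Subgroup.closure {f, g}) ω.out).ncard := by
    rw [Set.one_lt_ncard (Set.toFinite _)]
    exact ⟨_, mem_orbit_self _, _, fx_mem_orbit f g _, (hf _).symm⟩
  omega

lemma two_mul_numLoops_le (f g : Equiv.Perm (Fin n)) (hf : ∀ x, f x ≠ x) :
    2 * numLoops f g ≤ n := by
  classical
  haveI : Fintype (orbitRel.Quotient (Subgroup.closure {f, g}) (Fin n)) := Fintype.ofFinite _
  have hs := sum_orbit_card f g
  have : 2 * numLoops f g = ∑ _ω : orbitRel.Quotient (Subgroup.closure {f, g}) (Fin n), 2 := by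
    rw [Finset.sum_const, numLoops, Nat.card_eq_fintype_card]
    ring_nf
    rfl
  rw [this]
  exact le_of_le_of_eq (Finset.sum_le_sum fun ω _ => two_le_orbit_card f g hf ω) hs

lemma orbit_card_eq_two (f g : Equiv.Perm (Fin n)) (hf : ∀ x, f x ≠ x)
    (h : 2 * numLoops f g = n)
    (ω : orbitRel.Quotient (Subgroup.closure {f, g}) (Fin n)) : Nat.card ω.orbit = 2 := by
  classical
  haveI : Fintype (orbitRel.Quotient (Subgroup.closure {f, g}) (Fin n)) := Fintype.ofFinite _
  have hs := sum_orbit_card f g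
  have hconst : ∑ _ω : orbitRel.Quotient (Subgroup.closure {f, g}) (Fin n), 2 = n := by
    rw [Finset.sum_const, smul_eq_mul, Finset.card_univ, mul_comm]
    rw [numLoops, Nat.card_eq_fintype_card] at h
    exact h
  have := (Finset.sum_eq_sum_iff_of_le
    (fun ω (_ : ω ∈ Finset.univ) => two_le_orbit_card f g hf ω)).mp
    (hconst.trans hs.symm)
  exact (this ω (Finset.mem_univ ω)).symm

lemma eq_of_two_mul_numLoops (f g : Equiv.Perm (Fin n)) (hf : ∀ x, f x ≠ x)
    (hg : ∀ x, g x ≠ x) (h : 2 * numLoops f g = n) : f = g := by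
  ext x
  set G := Subgroup.closure ({f, g} : Set (Equiv.Perm (Fin n)))
  have horb : orbitRel.Quotient.orbit (Quotient.mk'' x : orbitRel.Quotient G (Fin n))
      = orbit G x := orbitRel.Quotient.orbit_mk x
  have hcard : (orbit G x).ncard = 2 := by
    rw [← Nat.card_coe_set_eq, ← horb]
    exact orbit_card_eq_two f g hf h _
  have hsub : ({x, f x} : Set (Fin n)) ⊆ orbit G x := by
    rintro y (rfl | rfl)
    · exact mem_orbit_self _
    · exact fx_mem_orbit f g x
  have heq : ({x, f x} : Set (Fin n)) = orbit G x :=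
    Set.eq_of_subset_of_ncard_le hsub
      (by rw [hcard, Set.ncard_pair (Ne.symm (hf x))]) (Set.toFinite _)
  have := gx_mem_orbit f g x
  rw [← heq] at this
  rcases this with h1 | h1
  · exact absurd h1 (hg x)
  · exact congrArg _ h1.symm

lemma orbit_self_eq_pair (f : Equiv.Perm (Fin n)) (hf : f * f = 1) (x : Fin n) :
    orbit (Subgroup.closure ({f, f} : Set (Equiv.Perm (Fin n)))) x = {x, f x} := by
  apply Set.Subset.antisymm
  · rintro y ⟨⟨c, hc⟩, rfl⟩
    rw [Set.pair_eq_singleton, Subgroup.mem_closure_singleton] at hc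
    obtain ⟨m, rfl⟩ := hc
    have h2 : f ^ (2 : ℤ) = 1 := by
      rw [show (2 : ℤ) = ((2 : ℕ) : ℤ) from rfl, zpow_natCast, pow_two, hf]
    rcases Int.even_or_odd m with ⟨k, hk⟩ | ⟨k, hk⟩
    · have : f ^ m = 1 := by
        rw [hk, ← two_mul, zpow_mul, h2, one_zpow]
      show (f ^ m) x ∈ _
      rw [this]
      exact Set.mem_insert _ _
    · have : f ^ m = f := by
        rw [hk, zpow_add, zpow_mul, h2, one_zpow, one_mul, zpow_one]
      show (f ^ m) x ∈ _
      rw [this]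
      exact Set.mem_insert_of_mem _ rfl
  · rintro y (rfl | rfl)
    · exact mem_orbit_self _
    · exact fx_mem_orbit f f _

lemma two_mul_numLoops_self (f : Equiv.Perm (Fin n)) (hf : f * f = 1) (hf2 : ∀ x, f x ≠ x) :
    2 * numLoops f f = n := by
  classical
  haveI : Fintype (orbitRel.Quotient (Subgroup.closure {f, f}) (Fin n)) := Fintype.ofFinite _
  have hs := sum_orbit_card f f
  have hcard : ∀ ω : orbitRel.Quotient (Subgroup.closure {f, f}) (Fin n),
      Nat.card ω.orbit = 2 := by
    intro ω
    rw [orbitRel.Quotient.orbit_eq_orbit_out ω Quotient.out_eq', Nat.card_coe_set_eq,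
      orbit_self_eq_pair f hf, Set.ncard_pair (Ne.symm (hf2 _))]
  rw [Finset.sum_congr rfl (fun ω _ => hcard ω), Finset.sum_const, smul_eq_mul,
    Finset.card_univ, mul_comm] at hs
  rw [numLoops, Nat.card_eq_fintype_card]
  exact hs


/-- Positivity of the universal pairing on unoriented 1-manifolds with
boundary `2j` points: such a manifold is a perfect matching `f` of the
boundary points together with `k` closed circles; gluing `(f,k)` to `(g,l)`
produces `numLoops f g + k + l` circles, recorded as a power of `X` in
`ℂ[X]`. -/
theorem unoriented_one_manifold_pairing_positive (j : ℕ)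
    (a : ({f : Equiv.Perm (Fin (2 * j)) // IsPerfectMatching f} × ℕ) →₀ ℂ)
    (h : (a.sum fun p x => a.sum fun q y =>
        Polynomial.C (x * (starRingEnd ℂ) y) *
          Polynomial.X ^ (numLoops p.1.1 q.1.1 + p.2 + q.2)) = (0 : Polynomial ℂ)) :
    a = 0 := by
  classical
  by_contra ha
  have hsupp : a.support.Nonempty := Finsupp.support_nonempty_iff.mpr ha
  set s := a.support with hs
  set T := s.image Prod.snd with hT
  have hTne : T.Nonempty := hsupp.image _
  set m := T.max' hTne with hm
  obtain ⟨p₀, hp₀s, hp₀m⟩ : ∃ p ∈ s, p.2 = m := by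
    obtain ⟨p, hp, hpm⟩ := Finset.mem_image.mp (T.max'_mem hTne)
    exact ⟨p, hp, hpm⟩
  have hle : ∀ p ∈ s, p.2 ≤ m := fun p hp =>
    Finset.le_max' T p.2 (Finset.mem_image_of_mem _ hp)
  -- facts about numLoops
  have hL_le : ∀ p q : {f : Equiv.Perm (Fin (2 * j)) // IsPerfectMatching f},
      numLoops p.1 q.1 ≤ j := fun p q => by
    have := two_mul_numLoops_le p.1 q.1 p.2.2
    omega
  have hL_self : ∀ p : {f : Equiv.Perm (Fin (2 * j)) // IsPerfectMatching f},
      numLoops p.1 p.1 = j := fun p => by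
    have := two_mul_numLoops_self p.1 p.2.1 p.2.2
    omega
  have hL_eq : ∀ p q : {f : Equiv.Perm (Fin (2 * j)) // IsPerfectMatching f},
      numLoops p.1 q.1 = j → p = q := fun p q hpq =>
    Subtype.ext (eq_of_two_mul_numLoops p.1 q.1 p.2.2 q.2.2 (by omega))
  -- take the coefficient of X ^ (j + 2 * m)
  have hc := congrArg (fun P => Polynomial.coeff P (j + 2 * m)) h
  simp only [Finsupp.sum, Polynomial.finset_sum_coeff, Polynomial.coeff_C_mul,
    Polynomial.coeff_X_pow, Polynomial.coeff_zero, mul_ite, mul_one, mul_zero] at hc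
  -- simplify the double sum
  have key : ∀ p ∈ s, (∑ q ∈ s, if j + 2 * m = numLoops p.1.1 q.1.1 + p.2 + q.2
        then a p * (starRingEnd ℂ) (a q) else 0)
      = if p.2 = m then a p * (starRingEnd ℂ) (a p) else 0 := by
    intro p hp
    by_cases hpm : p.2 = m
    · rw [if_pos hpm]
      have hcond : ∀ q ∈ s, (j + 2 * m = numLoops p.1.1 q.1.1 + p.2 + q.2) ↔ q = p := by
        intro q hq
        constructor
        · intro he'
          have he := he'.symm
          have h1 := hL_le p.1 q.1
          have h2 := hle q hq
          have hLj : numLoops p.1.1 q.1.1 = j := by omega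
          have : p.1 = q.1 := hL_eq p.1 q.1 hLj
          have hq2 : q.2 = m := by omega
          exact Prod.ext this.symm (hq2.trans hpm.symm)
        · rintro rfl
          rw [hL_self, hpm]
          ring
      rw [Finset.sum_congr rfl fun q hq =>
        if_congr (hcond q hq) rfl rfl]
      rw [Finset.sum_ite_eq' s p (fun q => a p * (starRingEnd ℂ) (a q)), if_pos hp]
    · rw [if_neg hpm]
      refine Finset.sum_eq_zero fun q hq => ?_
      rw [if_neg]
      have h1 := hL_le p.1 q.1
      have h2 := hle q hq
      have h3 := hle p hp
      omega
  rw [Finset.sum_congr rfl key] at hc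
  -- now a sum of norm-squares vanishes
  have hre : (∑ p ∈ s, if p.2 = m then Complex.normSq (a p) else 0) = 0 := by
    have : (∑ p ∈ s, if p.2 = m then a p * (starRingEnd ℂ) (a p) else 0)
        = ((∑ p ∈ s, if p.2 = m then Complex.normSq (a p) else 0 : ℝ) : ℂ) := by
      push_cast
      refine Finset.sum_congr rfl fun p _ => ?_
      split_ifs
      · exact (Complex.mul_conj (a p))
      · simp
    rw [this] at hc
    exact_mod_cast hc
  have hzero := (Finset.sum_eq_zero_iff_of_nonneg fun p _ => by split_ifs; exacts [Complex.normSq_nonneg _, le_refl 0]).mp hre p₀ hp₀s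
  rw [if_pos hp₀m] at hzero
  have : a p₀ = 0 := Complex.normSq_eq_zero.mp hzero
  exact (Finsupp.mem_support_iff.mp hp₀s) this
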